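/- For every real g with |g| ≤ 1, ∫₀^{2π} (1−g·cos θ)·log(1−g·cos θ) dθ/(2π) = 1 − √(1−g²) + log((1+√(1−g²))/2). -/

import Mathlib

open MeasureTheory intervalIntegral Real Filter Topology

noncomputable def Q (a θ : ℝ) : ℝ := 1 - 2*a*Real.cos θ + a^2

lemma Q_pos {a : ℝ} (ha : |a| < 1) (θ : ℝ) : 0 < Q a θ := by
  have h1 : a * Real.cos θ ≤ |a| := by
    calc a * Real.cos θ ≤ |a * Real.cos θ| := le_abs_self _
    _ = |a| * |Real.cos θ| := abs_mul _ _
    _ ≤ |a| * 1 := by gcongr; exact Real.abs_cos_le_one θ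
    _ = |a| := mul_one _
  have h2 : a^2 = |a|^2 := (sq_abs a).symm
  have : (1 - |a|)^2 ≤ Q a θ := by unfold Q; nlinarith [abs_nonneg a]
  nlinarith [abs_nonneg a]

lemma Q_le_four {a : ℝ} (ha : |a| ≤ 1) (θ : ℝ) : Q a θ ≤ 4 := by
  have h1 : -(a * Real.cos θ) ≤ |a| := by
    calc -(a * Real.cos θ) ≤ |a * Real.cos θ| := neg_le_abs _
    _ = |a| * |Real.cos θ| := abs_mul _ _
    _ ≤ |a| * 1 := by gcongr; exact Real.abs_cos_le_one θ
    _ = |a| := mul_one _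
  have h2 : a^2 = |a|^2 := (sq_abs a).symm
  unfold Q; nlinarith [abs_nonneg a]

lemma Q_ge {a : ℝ} (θ : ℝ) : (1 - |a|)^2 ≤ Q a θ := by
  have h1 : a * Real.cos θ ≤ |a| := by
    calc a * Real.cos θ ≤ |a * Real.cos θ| := le_abs_self _
    _ = |a| * |Real.cos θ| := abs_mul _ _
    _ ≤ |a| * 1 := by gcongr; exact Real.abs_cos_le_one θ
    _ = |a| := mul_one _
  have h2 : a^2 = |a|^2 := (sq_abs a).symm
  unfold Q; nlinarith

lemma Q_cont (a : ℝ) : Continuous (Q a) := by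
  unfold Q; fun_prop

lemma ftc_im {a : ℝ} (ha : |a| < 1) :
    ∫ θ in (0:ℝ)..(2*π), (a^2 - a*Real.cos θ) / Q a θ = 0 := by
  have hne : ∀ θ : ℝ, (1 : ℂ) - a * Complex.exp (θ * Complex.I) ≠ 0 := by
    intro θ h
    have hre : ((1 : ℂ) - a * Complex.exp (θ * Complex.I)).re = 1 - a * Real.cos θ := by
      simp [Complex.exp_mul_I, Complex.ext_iff, Complex.cos_ofReal_re]
    rw [h] at hre
    have h1 : a * Real.cos θ ≤ |a| := by
      calc a * Real.cos θ ≤ |a * Real.cos θ| := le_abs_self _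
      _ = |a| * |Real.cos θ| := abs_mul _ _
      _ ≤ |a| * 1 := by gcongr; exact Real.abs_cos_le_one θ
      _ = |a| := mul_one _
    simp at hre
    linarith
  have hslit : ∀ θ : ℝ, (1 : ℂ) - a * Complex.exp (θ * Complex.I) ∈ Complex.slitPlane := by
    intro θ
    left
    have hre : ((1 : ℂ) - a * Complex.exp (θ * Complex.I)).re = 1 - a * Real.cos θ := by
      simp [Complex.exp_mul_I, Complex.ext_iff, Complex.cos_ofReal_re]
    rw [hre]
    have h1 : a * Real.cos θ ≤ |a| := by
      calc a * Real.cos θ ≤ |a * Real.cos θ| := le_abs_self _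
      _ = |a| * |Real.cos θ| := abs_mul _ _
      _ ≤ |a| * 1 := by gcongr; exact Real.abs_cos_le_one θ
      _ = |a| := mul_one _
    linarith
  have hD : ∀ θ : ℝ, HasDerivAt
      (fun t : ℝ => (Complex.log (1 - a * Complex.exp (t * Complex.I))).im)
      ((a^2 - a*Real.cos θ) / Q a θ) θ := by
    intro θ
    have h1 : HasDerivAt (fun t : ℝ => (t : ℂ)) 1 θ := by
      simpa using (hasDerivAt_id θ).ofReal_comp
    have h2 : HasDerivAt (fun t : ℝ => (t : ℂ) * Complex.I) Complex.I θ := by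
      simpa using h1.mul_const Complex.I
    have h3 : HasDerivAt (fun t : ℝ => Complex.exp ((t : ℂ) * Complex.I))
        (Complex.exp ((θ : ℂ) * Complex.I) * Complex.I) θ := by
      simpa using h2.cexp
    have h4 : HasDerivAt (fun t : ℝ => (1 : ℂ) - a * Complex.exp ((t : ℂ) * Complex.I))
        (-(a * (Complex.exp ((θ : ℂ) * Complex.I) * Complex.I))) θ := by
      simpa using ((h3.const_mul (a : ℂ)).const_sub 1)
    have h5 := h4.clog_real (hslit θ)
    have h6 : HasDerivAt (fun t : ℝ => (Complex.log (1 - a * Complex.exp (t * Complex.I))).im)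
        ((-(a * (Complex.exp ((θ : ℂ) * Complex.I) * Complex.I)) / (1 - a * Complex.exp ((θ : ℂ) * Complex.I))).im) θ := by
      have := Complex.imCLM.hasFDerivAt.comp_hasDerivAt θ h5
      exact this
    convert h6 using 1
    have hq : ((1:ℂ) - a * Complex.exp (θ * Complex.I)) ≠ 0 := hne θ
    rw [Complex.div_im]
    have he : Complex.exp ((θ:ℂ) * Complex.I) = Real.cos θ + Real.sin θ * Complex.I :=
      by rw [Complex.exp_mul_I]; simp
    have hnsq : Complex.normSq (1 - (a:ℂ) * Complex.exp (θ * Complex.I)) = Q a θ := by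
      rw [he]; simp [Complex.normSq_apply, Q, Complex.cos_ofReal_re, Complex.sin_ofReal_re]
      nlinarith [Real.sin_sq_add_cos_sq θ]
    rw [hnsq, he]
    have hQ := (Q_pos ha θ).ne'
    simp only [Complex.add_re, Complex.add_im, Complex.mul_re, Complex.mul_im, Complex.I_re,
      Complex.I_im, Complex.ofReal_re, Complex.ofReal_im, Complex.sub_re, Complex.sub_im,
      Complex.neg_re, Complex.neg_im, Complex.one_re, Complex.one_im]
    field_simp
    linear_combination (-(a^2)) * Real.sin_sq_add_cos_sq θ
  have hcont : Continuous (fun θ : ℝ => (a^2 - a*Real.cos θ) / Q a θ) := by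
    apply Continuous.div (by fun_prop) (Q_cont a)
    exact fun θ => (Q_pos ha θ).ne'
  rw [intervalIntegral.integral_eq_sub_of_hasDerivAt (fun x _ => hD x)
    (hcont.intervalIntegrable _ _)]
  have : ((2 * π : ℝ) : ℂ) * Complex.I = 2 * π * Complex.I := by push_cast; ring
  rw [this, Complex.exp_two_pi_mul_I]
  norm_num

lemma cont_invQ {a : ℝ} (ha : |a| < 1) : Continuous (fun θ => (Q a θ)⁻¹) :=
  (Q_cont a).inv₀ (fun θ => (Q_pos ha θ).ne')

lemma poisson {a : ℝ} (ha : |a| < 1) :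
    ∫ θ in (0:ℝ)..(2*π), (Q a θ)⁻¹ = 2*π/(1-a^2) := by
  have ha2 : a^2 < 1 := by
    have := abs_nonneg a; nlinarith [sq_abs a]
  have key : ∀ θ : ℝ, (a^2 - a*Real.cos θ) / Q a θ = 1/2 - ((1-a^2)/2) * (Q a θ)⁻¹ := by
    intro θ
    have hQ := (Q_pos ha θ).ne'
    field_simp
    unfold Q; ring
  have h1 : ∫ θ in (0:ℝ)..(2*π), (1/2 - ((1-a^2)/2) * (Q a θ)⁻¹) = 0 := by
    have hcg : ∫ θ in (0:ℝ)..(2*π), (1/2 - ((1-a^2)/2) * (Q a θ)⁻¹) =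
        ∫ θ in (0:ℝ)..(2*π), (a^2 - a*Real.cos θ) / Q a θ :=
      intervalIntegral.integral_congr (fun θ _ => (key θ).symm)
    rw [hcg, ftc_im ha]
  have hint : IntervalIntegrable (fun θ => (Q a θ)⁻¹) volume 0 (2*π) :=
    (cont_invQ ha).intervalIntegrable _ _
  rw [intervalIntegral.integral_sub (by apply intervalIntegrable_const)
    (hint.const_mul _),
    intervalIntegral.integral_const_mul, intervalIntegral.integral_const] at h1
  have hpi := Real.pi_pos
  simp only [smul_eq_mul] at h1
  rw [eq_div_iff (by nlinarith : (1:ℝ)-a^2 ≠ 0)]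
  nlinarith [h1]

lemma sinsq_int {a : ℝ} (ha : |a| < 1) :
    ∫ θ in (0:ℝ)..(2*π), (Real.sin θ)^2 * (Q a θ)⁻¹ = π := by
  rcases eq_or_ne a 0 with rfl | h0
  · have hcg : ∀ θ : ℝ, (Real.sin θ)^2 * (Q 0 θ)⁻¹ = Real.sin θ ^ 2 := by
      intro θ; simp [Q]
    rw [intervalIntegral.integral_congr (fun θ _ => hcg θ), integral_sin_sq]
    simp [Real.sin_two_pi, Real.cos_two_pi]
  · have ha2 : a^2 < 1 := by
      have := abs_nonneg a; nlinarith [sq_abs a]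
    have key : ∀ θ : ℝ, (Real.sin θ)^2 * (Q a θ)⁻¹ =
        (1/(2*a)) * Real.cos θ + (1+a^2)/(4*a^2) - ((1-a^2)^2/(4*a^2)) * (Q a θ)⁻¹ := by
      intro θ
      have hQ := (Q_pos ha θ).ne'
      have hs := Real.sin_sq_add_cos_sq θ
      field_simp
      unfold Q
      unfold Q at hQ
      linear_combination (8*a^2) * hs
    rw [intervalIntegral.integral_congr (fun θ _ => key θ)]
    have hint : IntervalIntegrable (fun θ => (Q a θ)⁻¹) volume 0 (2*π) :=
      (cont_invQ ha).intervalIntegrable _ _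
    rw [intervalIntegral.integral_sub (IntervalIntegrable.add
        (((continuous_cos.intervalIntegrable _ _).const_mul _))
        intervalIntegrable_const) (hint.const_mul _),
      intervalIntegral.integral_add ((continuous_cos.intervalIntegrable _ _).const_mul _)
        intervalIntegrable_const,
      intervalIntegral.integral_const_mul, intervalIntegral.integral_const_mul,
      integral_cos, intervalIntegral.integral_const, poisson ha]
    have hne : (1:ℝ)-a^2 ≠ 0 := by nlinarith
    rw [Real.sin_two_pi, Real.sin_zero]
    simp only [smul_eq_mul]
    field_simp
    ring

lemma cont_logQ {a : ℝ} (ha : |a| < 1) : Continuous (fun θ => Real.log (Q a θ)) :=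
  (Q_cont a).log (fun θ => (Q_pos ha θ).ne')

lemma coslog {a : ℝ} (ha : |a| < 1) :
    ∫ θ in (0:ℝ)..(2*π), Real.cos θ * Real.log (Q a θ) = -(2*π*a) := by
  have hQd : ∀ θ : ℝ, HasDerivAt (fun t => Q a t) (2*a*Real.sin θ) θ := by
    intro θ
    have h1 : HasDerivAt (fun t : ℝ => Real.cos t) (-Real.sin θ) θ := Real.hasDerivAt_cos θ
    have := ((h1.const_mul (2*a)).const_sub 1).add_const (a^2)
    simpa [Q, mul_comm, mul_assoc, mul_left_comm, sub_eq_add_neg] using this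
    
  have hu : ∀ θ : ℝ, HasDerivAt (fun t => Real.log (Q a t))
      ((2*a*Real.sin θ) / Q a θ) θ :=
    fun θ => (hQd θ).log (Q_pos ha θ).ne'
  have hv : ∀ θ : ℝ, HasDerivAt Real.sin (Real.cos θ) θ := Real.hasDerivAt_sin
  have hIBP := intervalIntegral.integral_mul_deriv_eq_deriv_mul (a := (0:ℝ)) (b := 2*π)
    (u := fun t => Real.log (Q a t)) (v := Real.sin)
    (u' := fun θ => (2*a*Real.sin θ) / Q a θ) (v' := Real.cos)
    (fun x _ => hu x) (fun x _ => hv x)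
    (((continuous_const.mul continuous_sin).div (Q_cont a)
        (fun θ => (Q_pos ha θ).ne')).intervalIntegrable _ _)
    (continuous_cos.intervalIntegrable _ _)
  have hflip : ∫ θ in (0:ℝ)..(2*π), Real.cos θ * Real.log (Q a θ)
      = ∫ θ in (0:ℝ)..(2*π), Real.log (Q a θ) * Real.cos θ :=
    intervalIntegral.integral_congr (fun θ _ => mul_comm _ _)
  rw [hflip, hIBP, Real.sin_zero, Real.sin_two_pi]
  have h2 : ∫ θ in (0:ℝ)..(2*π), (2*a*Real.sin θ) / Q a θ * Real.sin θ
      = 2*a * ∫ θ in (0:ℝ)..(2*π), (Real.sin θ)^2 * (Q a θ)⁻¹ := by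
    rw [← intervalIntegral.integral_const_mul]
    exact intervalIntegral.integral_congr (fun θ _ => by field_simp)
  rw [h2, sinsq_int ha]
  ring

noncomputable def Gg (a : ℝ) : ℝ := ∫ θ in (0:ℝ)..(2*π), Real.log (Q a θ)

lemma per_logQ (a : ℝ) : Function.Periodic (fun θ => Real.log (Q a θ)) (2*π) := by
  intro x; simp [Q, Real.cos_add_two_pi]

lemma Gg_neg (a : ℝ) : Gg (-a) = Gg a := by
  unfold Gg
  have h1 : ∀ θ : ℝ, Real.log (Q (-a) θ) = Real.log (Q a (θ + π)) := by
    intro θ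
    have : Q (-a) θ = Q a (θ + π) := by unfold Q; rw [Real.cos_add_pi]; ring
    rw [this]
  rw [intervalIntegral.integral_congr (fun θ _ => h1 θ),
    intervalIntegral.integral_comp_add_right (fun θ => Real.log (Q a θ)) π]
  have hper := (per_logQ a).intervalIntegral_add_eq (0 + π) 0
  simpa [add_comm, add_assoc, add_left_comm] using hper

lemma abs_sq_lt {a : ℝ} (ha : |a| < 1) : |a^2| < 1 := by
  rw [abs_pow]
  nlinarith [abs_nonneg a]

lemma Gg_sq {a : ℝ} (ha : |a| < 1) : Gg (a^2) = 2 * Gg a := by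
  have ha2 : |a^2| < 1 := abs_sq_lt ha
  have han : |(-a)| < 1 := by rwa [abs_neg]
  have hpoint : ∀ θ : ℝ, Real.log (Q (a^2) (2*θ)) = Real.log (Q a θ) + Real.log (Q (-a) θ) := by
    intro θ
    rw [← Real.log_mul (Q_pos ha θ).ne' (Q_pos han θ).ne']
    congr 1
    unfold Q
    rw [Real.cos_two_mul]
    ring
  have hL : ∫ θ in (0:ℝ)..(2*π), Real.log (Q (a^2) (2*θ)) = Gg (a^2) := by
    have h1 := intervalIntegral.integral_comp_mul_left (a := (0:ℝ)) (b := 2*π)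
      (fun u => Real.log (Q (a^2) u)) (c := 2) (by norm_num)
    rw [h1]
    have hint : ∀ (s t : ℝ), IntervalIntegrable (fun u => Real.log (Q (a^2) u)) volume s t :=
      fun s t => (cont_logQ ha2).intervalIntegrable _ _
    have hb1 : (2:ℝ)*0 = 0 := by ring
    have hb2 : (2:ℝ)*(2*π) = 2*π + 2*π := by ring
    rw [hb1, hb2]
    have hsplit : ∫ u in (0:ℝ)..(2*π + 2*π), Real.log (Q (a^2) u)
        = (∫ u in (0:ℝ)..(2*π), Real.log (Q (a^2) u))
          + ∫ u in (2*π:ℝ)..(2*π + 2*π), Real.log (Q (a^2) u) :=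
      (intervalIntegral.integral_add_adjacent_intervals (hint _ _) (hint _ _)).symm
    rw [hsplit]
    have hper : ∫ u in (2*π:ℝ)..(2*π + 2*π), Real.log (Q (a^2) u)
        = ∫ u in (0:ℝ)..(0 + 2*π), Real.log (Q (a^2) u) :=
      (per_logQ (a^2)).intervalIntegral_add_eq (2*π) 0
    rw [hper]
    unfold Gg
    rw [zero_add]
    rw [smul_eq_mul]
    ring
  calc Gg (a^2) = ∫ θ in (0:ℝ)..(2*π), Real.log (Q (a^2) (2*θ)) := hL.symm
  _ = ∫ θ in (0:ℝ)..(2*π), (Real.log (Q a θ) + Real.log (Q (-a) θ)) :=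
      intervalIntegral.integral_congr (fun θ _ => hpoint θ)
  _ = Gg a + Gg (-a) := intervalIntegral.integral_add
      ((cont_logQ ha).intervalIntegrable _ _) ((cont_logQ han).intervalIntegrable _ _)
  _ = 2 * Gg a := by rw [Gg_neg]; ring

lemma Gg_iter {a : ℝ} (ha : |a| < 1) (n : ℕ) : (2:ℝ)^n * Gg a = Gg (a^(2^n)) := by
  induction n with
  | zero => simp
  | succ n ih =>
    have hb : |a^(2^n)| < 1 := by
      rw [abs_pow]
      have h := pow_le_of_le_one (abs_nonneg a) ha.le (Nat.two_pow_pos n).ne'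
      exact lt_of_le_of_lt h ha
    have h1 : a^(2^(n+1)) = (a^(2^n))^2 := by
      rw [← pow_mul, pow_succ]
    rw [h1, Gg_sq hb, ← ih]
    ring

lemma Gg_bound {r : ℝ} (hr0 : 0 ≤ r) (hr : r < 1) {b : ℝ} (hb : |b| ≤ r) :
    |Gg b| ≤ (Real.log 4 - 2*Real.log (1-r)) * (2*π) := by
  set C := Real.log 4 - 2*Real.log (1-r) with hC
  have hb1 : |b| ≤ 1 := hb.trans hr.le
  have h1r : 0 < 1 - r := by linarith
  have hQlow : ∀ θ, (1-r)^2 ≤ Q b θ := by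
    intro θ
    have := Q_ge (a := b) θ
    nlinarith [abs_nonneg b]
  have hQpos : ∀ θ, 0 < Q b θ := fun θ => lt_of_lt_of_le (by positivity) (hQlow θ)
  have hlr : Real.log (1-r) ≤ 0 := Real.log_nonpos (by linarith) (by linarith)
  have hl4 : 0 ≤ Real.log 4 := Real.log_nonneg (by norm_num)
  have hlogup : ∀ θ, Real.log (Q b θ) ≤ C := by
    intro θ
    have h4 : Real.log (Q b θ) ≤ Real.log 4 := Real.log_le_log (hQpos θ) (Q_le_four hb1 θ)
    rw [hC]; linarith
  have hlogdown : ∀ θ, -C ≤ Real.log (Q b θ) := by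
    intro θ
    have h5 : Real.log ((1-r)^2) ≤ Real.log (Q b θ) := Real.log_le_log (by positivity) (hQlow θ)
    rw [Real.log_pow] at h5
    push_cast at h5
    rw [hC]; linarith
  have hnorm := intervalIntegral.norm_integral_le_of_norm_le_const (a := (0:ℝ)) (b := 2*π)
    (C := C) (f := fun θ => Real.log (Q b θ))
    (fun x _ => by rw [Real.norm_eq_abs]; exact abs_le.mpr ⟨hlogdown x, hlogup x⟩)
  rw [Real.norm_eq_abs] at hnorm
  unfold Gg
  calc |∫ θ in (0:ℝ)..(2*π), Real.log (Q b θ)| ≤ C * |2*π - 0| := hnorm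
  _ = C * (2*π) := by rw [sub_zero, abs_of_nonneg (by positivity : (0:ℝ) ≤ 2*π)]

lemma Gg_zero {a : ℝ} (ha : |a| < 1) : Gg a = 0 := by
  set C := Real.log 4 - 2*Real.log (1 - |a|) with hC
  have hbound : ∀ n : ℕ, |Gg a| ≤ C * (2*π) / 2^n := by
    intro n
    have hiter := Gg_iter ha n
    have hble : |a^(2^n)| ≤ |a| := by
      rw [abs_pow]
      exact pow_le_of_le_one (abs_nonneg a) ha.le (Nat.two_pow_pos n).ne'
    have h := Gg_bound (abs_nonneg a) ha hble
    rw [← hiter, abs_mul, abs_pow, abs_two] at h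
    have h2 : (0:ℝ) < 2^n := by positivity
    rw [le_div_iff₀ h2]
    simp only [hC]
    linarith [h]
  have hten : Tendsto (fun n : ℕ => C * (2*π) / 2^n) atTop (𝓝 0) := by
    have h0 := tendsto_pow_atTop_nhds_zero_of_lt_one
      (by norm_num : (0:ℝ) ≤ 1/2) (by norm_num : (1:ℝ)/2 < 1)
    have h2 := h0.const_mul (C*(2*π))
    rw [mul_zero] at h2
    convert h2 using 2 with n
    rw [div_eq_mul_inv, ← inv_pow]
    norm_num
  have hle : |Gg a| ≤ 0 := ge_of_tendsto' hten hbound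
  exact abs_eq_zero.mp (le_antisymm hle (abs_nonneg _))


lemma Gg_zero' {a : ℝ} (ha : |a| < 1) :
    ∫ θ in (0:ℝ)..(2*π), Real.log (Q a θ) = 0 := Gg_zero ha

lemma main_lt {g : ℝ} (hg : |g| < 1) :
    (1 / (2 * Real.pi)) * ∫ θ in (0 : ℝ)..(2 * Real.pi),
        (1 - g * Real.cos θ) * Real.log (1 - g * Real.cos θ) =
      1 - Real.sqrt (1 - g ^ 2) + Real.log ((1 + Real.sqrt (1 - g ^ 2)) / 2) := by
  have hg2 : g^2 < 1 := by nlinarith [abs_nonneg g, sq_abs g]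
  set s := Real.sqrt (1 - g^2) with hs
  have hs2 : s^2 = 1 - g^2 := Real.sq_sqrt (by linarith)
  have hs0 : 0 < s := Real.sqrt_pos.mpr (by linarith)
  have hs1 : s ≤ 1 := by nlinarith
  set a := g / (1 + s) with ha
  have h1s : (0:ℝ) < 1 + s := by linarith
  have haabs : |a| < 1 := by
    rw [ha, abs_div, abs_of_pos h1s, div_lt_one h1s]
    calc |g| < 1 := hg
    _ ≤ 1 + s := by linarith
  have hag : a * (1+s) = g := by rw [ha]; field_simp
  have hga : g * a = 1 - s := by
    rw [ha, mul_div_assoc']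
    rw [div_eq_iff h1s.ne']
    nlinarith [hs2]
  have h1a2' : (1 + a^2) * (1+s) = 2 := by
    rw [ha]
    field_simp
    nlinarith [hs2]
  have hL : Real.log ((1+s)/2) = Real.log ((1+s)/2) := rfl
  have hkey : ∀ θ, 1 - g * Real.cos θ = Q a θ * ((1+s)/2) := by
    intro θ
    unfold Q
    linear_combination (-(1/2:ℝ)) * h1a2' + Real.cos θ * hag
  have hpos : ∀ θ, 0 < 1 - g * Real.cos θ := by
    intro θ
    rw [hkey θ]
    have := Q_pos haabs θ
    positivity
  have hlog : ∀ θ, Real.log (1 - g * Real.cos θ)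
      = Real.log (Q a θ) + Real.log ((1+s)/2) := by
    intro θ
    rw [hkey θ, Real.log_mul (Q_pos haabs θ).ne' (by positivity)]
  have hpt : ∀ θ, (1 - g * Real.cos θ) * Real.log (1 - g * Real.cos θ)
      = Real.log (Q a θ) - g * (Real.cos θ * Real.log (Q a θ))
        + Real.log ((1+s)/2) * (1 - g * Real.cos θ) := by
    intro θ
    rw [hlog θ]
    unfold Q
    ring
  have hint1 : IntervalIntegrable (fun θ => Real.log (Q a θ)) volume 0 (2*π) :=
    (cont_logQ haabs).intervalIntegrable _ _
  have hint2 : IntervalIntegrable (fun θ => Real.cos θ * Real.log (Q a θ)) volume 0 (2*π) :=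
    (continuous_cos.mul (cont_logQ haabs)).intervalIntegrable _ _
  have hint3 : IntervalIntegrable (fun θ => (1 - g * Real.cos θ)) volume 0 (2*π) :=
    (by fun_prop : Continuous (fun θ : ℝ => 1 - g * Real.cos θ)).intervalIntegrable _ _
  have hI : ∫ θ in (0:ℝ)..(2*π), (1 - g * Real.cos θ) * Real.log (1 - g * Real.cos θ)
      = (∫ θ in (0:ℝ)..(2*π), Real.log (Q a θ))
        - g * (∫ θ in (0:ℝ)..(2*π), Real.cos θ * Real.log (Q a θ))
        + Real.log ((1+s)/2) * (∫ θ in (0:ℝ)..(2*π), (1 - g * Real.cos θ)) := by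
    rw [intervalIntegral.integral_congr (fun θ _ => hpt θ),
      intervalIntegral.integral_add (hint1.sub (hint2.const_mul g)) (hint3.const_mul _),
      intervalIntegral.integral_sub hint1 (hint2.const_mul g),
      intervalIntegral.integral_const_mul, intervalIntegral.integral_const_mul]
  have hcos0 : ∫ θ in (0:ℝ)..(2*π), (1 - g * Real.cos θ) = 2*π := by
    rw [intervalIntegral.integral_sub intervalIntegrable_const
      ((continuous_cos.intervalIntegrable _ _).const_mul _),
      intervalIntegral.integral_const_mul, integral_cos, intervalIntegral.integral_const]
    rw [Real.sin_two_pi, Real.sin_zero]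
    simp
  rw [hI, Gg_zero' haabs, coslog haabs, hcos0]
  have hpi := Real.pi_pos
  have : (1:ℝ)/(2*π) * (0 - g * -(2*π*a) + Real.log ((1+s)/2) * (2*π))
      = g*a + Real.log ((1+s)/2) := by field_simp; ring
  rw [this, hga]

lemma abs_mul_log_le {x : ℝ} (h0 : 0 ≤ x) (h2 : x ≤ 2) : |x * Real.log x| ≤ 2 := by
  rcases le_or_gt x 1 with h1 | h1
  · rcases eq_or_lt_of_le h0 with rfl | hx0
    · simp
    · have hxln : Real.log x⁻¹ ≤ x⁻¹ - 1 := Real.log_le_sub_one_of_pos (by positivity)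
      rw [Real.log_inv] at hxln
      have hlog : Real.log x ≤ 0 := Real.log_nonpos h0 h1
      have h3 : -(x * Real.log x) ≤ 1 := by
        calc -(x * Real.log x) = x * (-Real.log x) := by ring
        _ ≤ x * (x⁻¹ - 1) := by
            apply mul_le_mul_of_nonneg_left _ h0
            linarith
        _ = 1 - x := by field_simp
        _ ≤ 1 := by linarith
      have h4 : x * Real.log x ≤ 0 := mul_nonpos_iff.mpr (Or.inl ⟨h0, hlog⟩)
      rw [abs_of_nonpos h4]; linarith
  · have hlog0 : 0 ≤ Real.log x := Real.log_nonneg h1.le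
    have hlog2 : Real.log x ≤ 1 := by
      have := Real.log_le_sub_one_of_pos (by linarith : (0:ℝ) < x)
      linarith
    rw [abs_of_nonneg (by nlinarith)]
    nlinarith

/-- For |g| ≤ 1, ∫₀^{2π} (1−g cos θ)·log(1−g cos θ) dθ/(2π) = 1 − √(1−g²) + log((1+√(1−g²))/2). -/
theorem statement17 (g : ℝ) (hg : |g| ≤ 1) :
    (1 / (2 * Real.pi)) * ∫ θ in (0 : ℝ)..(2 * Real.pi),
        (1 - g * Real.cos θ) * Real.log (1 - g * Real.cos θ) =
      1 - Real.sqrt (1 - g ^ 2) + Real.log ((1 + Real.sqrt (1 - g ^ 2)) / 2) := by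
  have hpi := Real.pi_pos
  set gs : ℕ → ℝ := fun n => g * (1 - 1/(n+1)) with hgs
  have hfrac : ∀ n : ℕ, 0 < 1/(n+1:ℝ) ∧ 1/(n+1:ℝ) ≤ 1 := by
    intro n
    constructor
    · positivity
    · rw [div_le_one (by positivity)]
      have : (0:ℝ) ≤ n := Nat.cast_nonneg n
      linarith
  have hgn : ∀ n : ℕ, |gs n| < 1 := by
    intro n
    obtain ⟨hf1, hf2⟩ := hfrac n
    rw [hgs]
    simp only
    rw [abs_mul, abs_of_nonneg (by linarith : (0:ℝ) ≤ 1 - 1/(n+1:ℝ))]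
    calc |g| * (1 - 1/(n+1:ℝ)) ≤ 1 * (1 - 1/(n+1:ℝ)) :=
        mul_le_mul_of_nonneg_right hg (by linarith)
    _ = 1 - 1/(n+1:ℝ) := one_mul _
    _ < 1 := by linarith
  have hgtend : Tendsto gs atTop (𝓝 g) := by
    have h0 : Tendsto (fun n : ℕ => 1/(n+1:ℝ)) atTop (𝓝 0) :=
      tendsto_one_div_add_atTop_nhds_zero_nat
    have := (tendsto_const_nhds (x := (1:ℝ)) (f := atTop)).sub h0
    have h2 := this.const_mul g
    simpa [hgs, one_div] using h2
  have hbnd : ∀ (h : ℝ), |h| ≤ 1 → ∀ θ : ℝ, 0 ≤ 1 - h*Real.cos θ ∧ 1 - h*Real.cos θ ≤ 2 := by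
    intro h hh θ
    have h1 : |h * Real.cos θ| ≤ 1 := by
      rw [abs_mul]
      calc |h| * |Real.cos θ| ≤ 1 * 1 :=
        mul_le_mul hh (Real.abs_cos_le_one θ) (abs_nonneg _) zero_le_one
      _ = 1 := one_mul 1
    obtain ⟨ha, hb⟩ := abs_le.mp h1
    constructor <;> linarith
  have hLHS : Tendsto (fun n : ℕ => ∫ θ in (0:ℝ)..(2*π),
      (1 - gs n * Real.cos θ) * Real.log (1 - gs n * Real.cos θ)) atTop
      (𝓝 (∫ θ in (0:ℝ)..(2*π), (1 - g * Real.cos θ) * Real.log (1 - g * Real.cos θ))) := by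
    apply intervalIntegral.tendsto_integral_filter_of_dominated_convergence
      (bound := fun _ => (2:ℝ))
    · refine Eventually.of_forall (fun n => ?_)
      have hc : Continuous (fun θ : ℝ => (1 - gs n * Real.cos θ) * Real.log (1 - gs n * Real.cos θ)) := by
        have := Real.continuous_mul_log.comp
          (by fun_prop : Continuous (fun θ : ℝ => 1 - gs n * Real.cos θ))
        exact this
      exact hc.aestronglyMeasurable
    · refine Eventually.of_forall (fun n => (MeasureTheory.ae_of_all _ (fun θ _ => ?_)))
      obtain ⟨hb1, hb2⟩ := hbnd (gs n) (hgn n).le θ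
      exact abs_mul_log_le hb1 hb2
    · exact intervalIntegrable_const
    · refine MeasureTheory.ae_of_all _ (fun θ _ => ?_)
      have hinner : Tendsto (fun n : ℕ => 1 - gs n * Real.cos θ) atTop
          (𝓝 (1 - g * Real.cos θ)) := by
        have := (hgtend.mul_const (Real.cos θ)).const_sub 1
        simpa [hgs, one_div] using this
      have := (Real.continuous_mul_log.tendsto (1 - g * Real.cos θ)).comp hinner
      exact this
  have hRHS : Tendsto (fun n : ℕ => 1 - Real.sqrt (1 - (gs n)^2)
        + Real.log ((1 + Real.sqrt (1 - (gs n)^2))/2)) atTop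
      (𝓝 (1 - Real.sqrt (1 - g^2) + Real.log ((1 + Real.sqrt (1 - g^2))/2))) := by
    have hsq : Tendsto (fun n : ℕ => Real.sqrt (1 - (gs n)^2)) atTop
        (𝓝 (Real.sqrt (1 - g^2))) := by
      have h1 : Tendsto (fun n : ℕ => 1 - (gs n)^2) atTop (𝓝 (1 - g^2)) := by
        have := (hgtend.pow 2).const_sub 1
        simpa using this
      exact (Real.continuous_sqrt.tendsto (1 - g^2)).comp h1
    have hs_nonneg : (0:ℝ) < (1 + Real.sqrt (1 - g^2))/2 := by
      have := Real.sqrt_nonneg (1 - g^2)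
      linarith
    refine Tendsto.add (tendsto_const_nhds.sub hsq) ?_
    have hlogc := (Real.continuousAt_log hs_nonneg.ne').tendsto
    have hdiv : Tendsto (fun n : ℕ => (1 + Real.sqrt (1 - (gs n)^2))/2) atTop
        (𝓝 ((1 + Real.sqrt (1 - g^2))/2)) := (tendsto_const_nhds.add hsq).div_const 2
    exact hlogc.comp hdiv
  have h1 := hLHS.const_mul (1/(2*π))
  have h2 : Tendsto (fun n : ℕ => 1 - Real.sqrt (1 - (gs n)^2)
        + Real.log ((1 + Real.sqrt (1 - (gs n)^2))/2)) atTop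
      (𝓝 ((1/(2*π)) * ∫ θ in (0:ℝ)..(2*π),
        (1 - g * Real.cos θ) * Real.log (1 - g * Real.cos θ))) := by
    refine h1.congr (fun n => ?_)
    exact main_lt (hgn n)
  exact tendsto_nhds_unique h2 hRHS
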